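/- Let a be a symmetric, continuous, coercive bilinear form on a real Hilbert space H with energy norm ||| · |||, F ∈ H', and let V₁, ..., V_m be closed subspaces of H with Galerkin solutions u_i ∈ V_i. Let V_H := ∩_i V_i with Galerkin solution u_H, and V_h a closed subspace containing all V_i with Galerkin solution u_h. Suppose norm equivalence |||u_h − u_H|||² ≃ Σ_{i=1}^m |||u_h − u_i|||² holds with equivalence constant C. Then using the Pythagoras identities |||u − u_H|||² = |||u − u_h|||² + |||u_h − u_H|||² and |||u − u_i|||² = |||u − u_h|||² + |||u_h − u_i|||², one obtains C^{-1}[E(V_H) − E(V_h)] ≤ Σ_{i=1}^m [E(V_i) − E(V_h)] ≤ C[E(V_H) − E(V_h)], where E(V) := ½|||u − u_V|||² for the Galerkin solution u_V on V. -/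
import Mathlib


theorem stmt14 {H : Type*} [NormedAddCommGroup H] [InnerProductSpace ℝ H] [CompleteSpace H]
    (a : H →L[ℝ] H →L[ℝ] ℝ) (hsym : ∀ v w, a v w = a w v)
    (c : ℝ) (hc : 0 < c) (hcoer : ∀ v, c * ‖v‖ ^ 2 ≤ a v v)
    (F : H →L[ℝ] ℝ) (u : H) (hu : ∀ v, a u v = F v)
    (m : ℕ) (V : Fin m → Submodule ℝ H) (hV : ∀ i, IsClosed ((V i : Set H)))
    (ui : Fin m → H) (hui : ∀ i, ui i ∈ V i) (hGali : ∀ i, ∀ v ∈ V i, a (ui i) v = F v)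
    (VH : Submodule ℝ H) (hVH : VH = ⨅ i, V i)
    (uH : H) (huH : uH ∈ VH) (hGalH : ∀ v ∈ VH, a uH v = F v)
    (Vh : Submodule ℝ H) (hVhcl : IsClosed ((Vh : Set H))) (hsub : ∀ i, V i ≤ Vh)
    (uh : H) (huh : uh ∈ Vh) (hGalh : ∀ v ∈ Vh, a uh v = F v)
    (C : ℝ) (hC : 0 < C)
    (hlow : C⁻¹ * (∑ i, a (uh - ui i) (uh - ui i)) ≤ a (uh - uH) (uh - uH))
    (hup : a (uh - uH) (uh - uH) ≤ C * ∑ i, a (uh - ui i) (uh - ui i)) :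
    C⁻¹ * ((1 / 2) * a (u - uH) (u - uH) - (1 / 2) * a (u - uh) (u - uh))
        ≤ ∑ i, ((1 / 2) * a (u - ui i) (u - ui i) - (1 / 2) * a (u - uh) (u - uh))
    ∧ ∑ i, ((1 / 2) * a (u - ui i) (u - ui i) - (1 / 2) * a (u - uh) (u - uh))
        ≤ C * ((1 / 2) * a (u - uH) (u - uH) - (1 / 2) * a (u - uh) (u - uh)) := by
  -- Galerkin orthogonality on Vh
  have key : ∀ w ∈ Vh, a (u - uh) w = 0 := by
    intro w hw
    simp [map_sub, ContinuousLinearMap.sub_apply, hu w, hGalh w hw]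
  -- Pythagoras-type expansion
  have expand : ∀ x : H, a (u - uh) (uh - x) = 0 →
      a (u - x) (u - x) = a (u - uh) (u - uh) + a (uh - x) (uh - x) := by
    intro x hx
    have h1 : u - x = (u - uh) + (uh - x) := by abel
    rw [h1]
    have hsym' : a (uh - x) (u - uh) = 0 := by rw [hsym]; exact hx
    simp only [map_add, ContinuousLinearMap.add_apply]
    linarith
  have pyth_i : ∀ i, a (u - ui i) (u - ui i)
      = a (u - uh) (u - uh) + a (uh - ui i) (uh - ui i) := by
    intro i
    exact expand _ (key _ (Vh.sub_mem huh (hsub i (hui i))))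
  have pyth_H : a (u - uH) (u - uH)
      = a (u - uh) (u - uh) + a (uh - uH) (uh - uH) := by
    rcases Nat.eq_zero_or_pos m with hm | hm
    · -- m = 0 : sums are empty, hup + coercivity give uh = uH
      have hsum : (∑ i, a (uh - ui i) (uh - ui i)) = 0 := by
        subst hm; simp
      have h0 : a (uh - uH) (uh - uH) ≤ 0 := by rw [hsum] at hup; linarith [hup]
      have h1 : c * ‖uh - uH‖ ^ 2 ≤ a (uh - uH) (uh - uH) := hcoer _
      have h2 : ‖uh - uH‖ ^ 2 ≤ 0 := by nlinarith
      have h3 : uh - uH = 0 := by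
        have := sq_nonneg ‖uh - uH‖
        have : ‖uh - uH‖ ^ 2 = 0 := le_antisymm h2 this
        have := pow_eq_zero_iff (n := 2) (by norm_num) |>.mp this
        exact norm_eq_zero.mp this
      have : uH = uh := by
        have := sub_eq_zero.mp h3; exact this.symm
      rw [this]
      simp
    · -- m > 0 : uH ∈ V 0 ≤ Vh
      have hmem : uH ∈ Vh := by
        have : VH ≤ V ⟨0, hm⟩ := by rw [hVH]; exact iInf_le _ _
        exact hsub _ (this huH)
      exact expand _ (key _ (Vh.sub_mem huh hmem))
  have hsumeq : (∑ i, ((1 / 2) * a (u - ui i) (u - ui i) - (1 / 2) * a (u - uh) (u - uh)))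
      = (1 / 2) * ∑ i, a (uh - ui i) (uh - ui i) := by
    rw [Finset.mul_sum]
    refine Finset.sum_congr rfl fun i _ => ?_
    rw [pyth_i i]; ring
  have hHeq : (1 / 2) * a (u - uH) (u - uH) - (1 / 2) * a (u - uh) (u - uh)
      = (1 / 2) * a (uh - uH) (uh - uH) := by rw [pyth_H]; ring
  rw [hsumeq, hHeq]
  have hCC : C⁻¹ * C = 1 := inv_mul_cancel₀ (ne_of_gt hC)
  have hCi : (0 : ℝ) ≤ C⁻¹ := (inv_pos.mpr hC).le
  set S := ∑ i, a (uh - ui i) (uh - ui i) with hS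
  set P := a (uh - uH) (uh - uH) with hP
  have h1 : C⁻¹ * P ≤ S := by
    have := mul_le_mul_of_nonneg_left hup hCi
    rw [← mul_assoc, hCC, one_mul] at this
    exact this
  have h2 : S ≤ C * P := by
    have := mul_le_mul_of_nonneg_left hlow hC.le
    rw [← mul_assoc, mul_inv_cancel₀ (ne_of_gt hC), one_mul] at this
    exact this
  constructor
  · linarith
  · linarith
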